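/- Let P be a Markov kernel on a measurable space X, let f: X → [1,∞) and V: X → [1,∞) be measurable, ε ∈ (0,1), and C a measurable subset of X with sup_C f/V < ∞. Suppose there exists a stopping time τ ≥ 1 such that for all x ∉ C: E_x[Σ_{k=0}^{τ-1} f(Φ_k)] ≤ V(x) and E_x[V(Φ_τ)] ≤ (1-ε)V(x). Then for all x ∉ C, E_x[Σ_{k=0}^{τ_C} f(Φ_k)] ≤ (ε^{-1} ∨ sup_C f/V) · V(x), where τ_C = inf{k ≥ 1 : Φ_k ∈ C} is the return time to C. -/

import Mathlib

open MeasureTheory ENNReal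

/-- The natural filtration on the canonical trajectory space `ℕ → X`:
`σ`-algebra generated by the coordinates up to time `n`. -/
noncomputable def natFiltration (X : Type) [MeasurableSpace X] (n : ℕ) :
    MeasurableSpace (ℕ → X) :=
  MeasurableSpace.comap (fun ω (i : Fin (n + 1)) => ω i) inferInstance

namespace Stmt6Aux

variable {X : Type} [MeasurableSpace X]

/-- shift of a trajectory by `m` steps -/
def shift (m : ℕ) (ω : ℕ → X) : ℕ → X := fun k => ω (k + m)

lemma measurable_shift (m : ℕ) : Measurable (shift (X := X) m) :=
  measurable_pi_lambda _ fun k => measurable_pi_apply (k + m)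

/-- one step of the iterated upper bound -/
noncomputable def SitAux (C : Set X) (f : X → ℝ) (S : (ℕ → X) → ℝ≥0∞) (m : ℕ) (ω : ℕ → X) : ℝ≥0∞ :=
  (∑ k ∈ Finset.range m, ENNReal.ofReal (f (ω k)))
  + Set.indicator {ω' : ℕ → X | (∀ j, 1 ≤ j → j < m → ω' j ∉ C) ∧ ω' m ∈ C}
      (fun ω' => ENNReal.ofReal (f (ω' m))) ω
  + Set.indicator {ω' : ℕ → X | ∀ j, 1 ≤ j → j < m + 1 → ω' j ∉ C}
      (fun ω' => S (shift m ω')) ω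

/-- iterated upper bound for the sum up to the return time -/
noncomputable def Sit (C : Set X) (f : X → ℝ) (τ : (ℕ → X) → ℕ) : ℕ → (ℕ → X) → ℝ≥0∞
  | 0 => fun _ => 0
  | n+1 => fun ω => SitAux C f (Sit C f τ n) (τ ω) ω

lemma Sit_zero (C : Set X) (f : X → ℝ) (τ : (ℕ → X) → ℕ) (ω : ℕ → X) :
    Sit C f τ 0 ω = 0 := rfl

lemma Sit_succ (C : Set X) (f : X → ℝ) (τ : (ℕ → X) → ℕ) (n : ℕ) (ω : ℕ → X) :
    Sit C f τ (n + 1) ω = SitAux C f (Sit C f τ n) (τ ω) ω := rfl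

lemma measurable_setA (C : Set X) (hC : MeasurableSet C) (m : ℕ) :
    MeasurableSet {ω : ℕ → X | ∀ j, 1 ≤ j → j < m → ω j ∉ C} := by
  have : {ω : ℕ → X | ∀ j, 1 ≤ j → j < m → ω j ∉ C}
      = ⋂ (j : ℕ), ⋂ (_ : 1 ≤ j), ⋂ (_ : j < m), (fun ω : ℕ → X => ω j) ⁻¹' Cᶜ := by
    ext ω; simp [Set.mem_iInter]
  rw [this]
  exact MeasurableSet.iInter fun j => MeasurableSet.iInter fun _ =>
    MeasurableSet.iInter fun _ => (measurable_pi_apply j) hC.compl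

lemma measurable_SitAux {C : Set X} (hC : MeasurableSet C) {f : X → ℝ} (hf : Measurable f)
    {S : (ℕ → X) → ℝ≥0∞} (hS : Measurable S) (m : ℕ) :
    Measurable (SitAux C f S m) := by
  apply Measurable.add
  apply Measurable.add
  · exact Finset.measurable_sum _ fun k _ =>
      (ENNReal.measurable_ofReal.comp (hf.comp (measurable_pi_apply k)))
  · apply Measurable.indicator
    · exact ENNReal.measurable_ofReal.comp (hf.comp (measurable_pi_apply m))
    · exact (measurable_setA C hC m).inter ((measurable_pi_apply m) hC)
  · exact (hS.comp (measurable_shift m)).indicator (measurable_setA C hC (m + 1))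

lemma measurable_comp_tau {τ : (ℕ → X) → ℕ} (hτ : Measurable τ)
    {F : ℕ → (ℕ → X) → ℝ≥0∞} (hF : ∀ m, Measurable (F m)) :
    Measurable fun ω => F (τ ω) ω := by
  have : (fun ω => F (τ ω) ω)
      = (fun p : (ℕ → X) × ℕ => F p.2 p.1) ∘ (fun ω => (ω, τ ω)) := rfl
  rw [this]
  exact (measurable_from_prod_countable_left fun m => hF m).comp (measurable_id.prodMk hτ)

lemma measurable_tau {τ : (ℕ → X) → ℕ}
    (hτstop : ∀ n, MeasurableSet[natFiltration X n] {ω | τ ω = n}) : Measurable τ := by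
  apply measurable_to_countable'
  intro n
  have hle : natFiltration X n ≤ (inferInstance : MeasurableSpace (ℕ → X)) :=
    Measurable.comap_le (measurable_pi_lambda _ fun i => measurable_pi_apply _)
  exact hle _ (hτstop n)

lemma measurable_Sit {C : Set X} (hC : MeasurableSet C) {f : X → ℝ} (hf : Measurable f)
    {τ : (ℕ → X) → ℕ} (hτ : Measurable τ) :
    ∀ n, Measurable (Sit C f τ n) := by
  intro n
  induction n with
  | zero => exact measurable_const
  | succ n IH =>
    exact measurable_comp_tau hτ (fun m => measurable_SitAux hC hf IH m)

lemma Sit_mono {C : Set X} {f : X → ℝ} {τ : (ℕ → X) → ℕ} :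
    ∀ n (ω : ℕ → X), Sit C f τ n ω ≤ Sit C f τ (n + 1) ω := by
  intro n
  induction n with
  | zero => intro ω; simp [Sit_zero]
  | succ n IH =>
    intro ω
    rw [Sit_succ, Sit_succ, SitAux, SitAux]
    apply add_le_add le_rfl
    apply Set.indicator_le_indicator
    exact IH _

/-- the partial sums of the return-time sum are dominated by the iterates -/
lemma dom {C : Set X} {f : X → ℝ} {τ : (ℕ → X) → ℕ}
    (hτ1 : ∀ ω, 1 ≤ τ ω) :
    ∀ n (ω : ℕ → X),
      (∑ k ∈ Finset.range n,
        Set.indicator {k' : ℕ | ∀ j, 1 ≤ j → j < k' → ω j ∉ C}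
          (fun k' => ENNReal.ofReal (f (ω k'))) k) ≤ Sit C f τ n ω := by
  intro n
  induction n with
  | zero => intro ω; simp [Sit_zero]
  | succ n IH =>
    intro ω
    set t := τ ω with ht_def
    have ht : 1 ≤ t := hτ1 ω
    set g : ℕ → ℝ≥0∞ := fun k =>
      Set.indicator {k' : ℕ | ∀ j, 1 ≤ j → j < k' → ω j ∉ C}
        (fun k' => ENNReal.ofReal (f (ω k'))) k with hg_def
    rw [Sit_succ, SitAux]
    have h1 : ∑ k ∈ Finset.range (n + 1), g k
        ≤ ∑ k ∈ Finset.range t, g k + ∑ k ∈ Finset.range n, g (t + k) := by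
      rw [← Finset.sum_range_add]
      exact Finset.sum_le_sum_of_subset (Finset.range_subset_range.2 (by omega))
    have h2 : ∑ k ∈ Finset.range t, g k ≤ ∑ k ∈ Finset.range t, ENNReal.ofReal (f (ω k)) :=
      Finset.sum_le_sum fun k _ => Set.indicator_le_self _ _ k
    -- bound the tail
    have h3 : ∑ k ∈ Finset.range n, g (t + k) ≤
        Set.indicator {ω' : ℕ → X | (∀ j, 1 ≤ j → j < t → ω' j ∉ C) ∧ ω' t ∈ C}
          (fun ω' => ENNReal.ofReal (f (ω' t))) ω
        + Set.indicator {ω' : ℕ → X | ∀ j, 1 ≤ j → j < t + 1 → ω' j ∉ C}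
          (fun ω' => Sit C f τ n (shift t ω')) ω := by
      by_cases hA : ∀ j, 1 ≤ j → j < t + 1 → ω j ∉ C
      · -- no entry into C up to time t : use the shifted iterate
        have hmem : ω ∈ {ω' : ℕ → X | ∀ j, 1 ≤ j → j < t + 1 → ω' j ∉ C} := hA
        rw [Set.indicator_of_mem hmem]
        refine le_add_left ?_
        refine le_trans ?_ (IH (shift t ω))
        apply Finset.sum_le_sum
        intro k _
        by_cases hk : (t + k) ∈ {k' : ℕ | ∀ j, 1 ≤ j → j < k' → ω j ∉ C}
        · have hk' : (k : ℕ) ∈ {k' : ℕ | ∀ j, 1 ≤ j → j < k' → (shift t ω) j ∉ C} := by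
            intro j hj1 hjk
            have : ω (j + t) ∉ C := hk (j + t) (by omega) (by omega)
            simpa [shift] using this
          rw [hg_def]
          simp only []
          rw [Set.indicator_of_mem hk, Set.indicator_of_mem hk']
          simp [shift, Nat.add_comm]
        · rw [hg_def]
          simp only []
          rw [Set.indicator_of_notMem hk]
          exact zero_le
      · -- the chain enters C at some time in [1, t]
        have hzero : ∀ k, 1 ≤ k → g (t + k) = 0 := by
          intro k hk
          rw [hg_def]
          simp only []
          apply Set.indicator_of_notMem
          intro hmem
          exact hA fun j hj1 hjt => hmem j hj1 (by omega)
        have hsum : ∑ k ∈ Finset.range n, g (t + k) ≤ g t := by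
          calc ∑ k ∈ Finset.range n, g (t + k)
              ≤ ∑ k ∈ Finset.range n, (if k = 0 then g t else 0) := by
                apply Finset.sum_le_sum
                intro k _
                by_cases hk0 : k = 0
                · simp [hk0]
                · rw [if_neg hk0, hzero k (by omega)]
            _ ≤ g t := by
                rw [Finset.sum_ite_eq' (Finset.range n) 0 (fun _ => g t)]
                split_ifs <;> simp
        refine le_trans hsum (le_trans ?_ (le_add_right le_rfl))
        -- g t ≤ mid indicator
        by_cases hCt : ω t ∈ C
        · by_cases hAt : t ∈ {k' : ℕ | ∀ j, 1 ≤ j → j < k' → ω j ∉ C}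
          · have hmid : ω ∈ {ω' : ℕ → X | (∀ j, 1 ≤ j → j < t → ω' j ∉ C) ∧ ω' t ∈ C} :=
              ⟨hAt, hCt⟩
            rw [Set.indicator_of_mem hmid, hg_def]
            simp only []
            exact le_trans (Set.indicator_le_self _ _ t) le_rfl
          · rw [hg_def]; simp only []
            rw [Set.indicator_of_notMem hAt]
            exact zero_le
        · have hAt : t ∉ {k' : ℕ | ∀ j, 1 ≤ j → j < k' → ω j ∉ C} := by
            intro hAt
            exact hA fun j hj1 hjt => by
              rcases Nat.lt_or_ge j t with hlt | hge
              · exact hAt j hj1 hlt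
              · have : j = t := by omega
                rw [this]; exact hCt
          rw [hg_def]; simp only []
          rw [Set.indicator_of_notMem hAt]
          exact zero_le
    calc ∑ k ∈ Finset.range (n + 1), g k
        ≤ ∑ k ∈ Finset.range t, g k + ∑ k ∈ Finset.range n, g (t + k) := h1
      _ ≤ (∑ k ∈ Finset.range t, ENNReal.ofReal (f (ω k)))
          + (Set.indicator {ω' : ℕ → X | (∀ j, 1 ≤ j → j < t → ω' j ∉ C) ∧ ω' t ∈ C}
              (fun ω' => ENNReal.ofReal (f (ω' t))) ω
            + Set.indicator {ω' : ℕ → X | ∀ j, 1 ≤ j → j < t + 1 → ω' j ∉ C}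
              (fun ω' => Sit C f τ n (shift t ω')) ω) := add_le_add h2 h3
      _ = _ := by rw [add_assoc]

section Markov

variable (ℙ : X → Measure (ℕ → X))

/-- Two measurable functions agreeing on `{ω | ω 0 = x}` have the same integral under `ℙ x`. -/
lemma start_congr (hprob : ∀ x, IsProbabilityMeasure (ℙ x))
    (hstart : ∀ x, (ℙ x) {ω | ω 0 = x} = 1) (x : X)
    {F F' : (ℕ → X) → ℝ≥0∞} (hF : Measurable F) (hF' : Measurable F')
    (h : ∀ ω, ω 0 = x → F ω = F' ω) : ∫⁻ ω, F ω ∂ℙ x = ∫⁻ ω, F' ω ∂ℙ x := by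
  haveI := hprob x
  have hN : MeasurableSet {ω : ℕ → X | F ω ≠ F' ω} := by
    have : {ω : ℕ → X | F ω ≠ F' ω} = {ω | F ω < F' ω} ∪ {ω | F' ω < F ω} := by
      ext ω
      simp only [Set.mem_setOf_eq, Set.mem_union, ← lt_or_lt_iff_ne]
    rw [this]
    exact (measurableSet_lt hF hF').union (measurableSet_lt hF' hF)
  have hsub : {ω : ℕ → X | ω 0 = x} ⊆ {ω : ℕ → X | F ω ≠ F' ω}ᶜ := by
    intro ω hω hne
    exact hne (h ω hω)
  have hcompl : (ℙ x) {ω : ℕ → X | F ω ≠ F' ω}ᶜ = 1 :=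
    le_antisymm prob_le_one (le_trans (le_of_eq (hstart x).symm) (measure_mono hsub))
  have hzero : (ℙ x) {ω : ℕ → X | F ω ≠ F' ω} = 0 := by
    have := measure_compl hN.compl (measure_ne_top (ℙ x) _)
    rw [compl_compl, hcompl, measure_univ] at this
    simpa using this
  exact lintegral_congr_ae (by rwa [Filter.EventuallyEq, ae_iff])

/-- Conditional Markov inequality at a deterministic time, with conditioning on an
event in the natural filtration, derived from the unconditional Markov property. -/
lemma markov_le (hprob : ∀ x, IsProbabilityMeasure (ℙ x))
    (hstart : ∀ x, (ℙ x) {ω | ω 0 = x} = 1)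
    (hMarkov : ∀ (x : X) (n : ℕ) (G : (ℕ → X) → ℝ≥0∞), Measurable G →
      (∫⁻ ω, G (fun k => ω (k + n)) ∂ℙ x)
        = ∫⁻ ω, (∫⁻ ω', G ω' ∂ℙ (ω n)) ∂ℙ x) :
    ∀ (n : ℕ) (x : X) (h : (Fin (n + 1) → X) → ℝ≥0∞), Measurable h →
      ∀ (G : (ℕ → X) → ℝ≥0∞), Measurable G →
      ∀ (g : X → ℝ≥0∞), Measurable g → (∀ y, (∫⁻ ω, G ω ∂ℙ y) ≤ g y) →
      (∫⁻ ω, h (fun i => ω i) * G (fun k => ω (k + n)) ∂ℙ x)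
        ≤ ∫⁻ ω, h (fun i => ω i) * g (ω n) ∂ℙ x := by
  intro n
  induction n with
  | zero =>
    intro x h hh G hG g hg hPg
    haveI := hprob x
    have hcoords : Measurable fun ω : ℕ → X => (fun i : Fin 1 => ω i) :=
      measurable_pi_lambda _ fun i => measurable_pi_apply _
    have e0 : (∫⁻ ω, h (fun i : Fin 1 => ω i) * G (fun k => ω (k + 0)) ∂ℙ x)
        = ∫⁻ ω, h (fun i : Fin 1 => ω i) * G ω ∂ℙ x := rfl
    have e1 : (∫⁻ ω, h (fun i : Fin 1 => ω i) * G ω ∂ℙ x)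
        = ∫⁻ ω, h (fun _ : Fin 1 => x) * G ω ∂ℙ x := by
      apply start_congr ℙ hprob hstart x
      · exact ((hh.comp hcoords).mul hG)
      · exact (measurable_const.mul hG)
      · intro ω hω
        have h1 : (fun i : Fin 1 => ω i) = (fun _ : Fin 1 => x) := by
          funext i
          have h2 : (i : ℕ) = 0 := by omega
          rw [h2, hω]
        rw [h1]
    have e2 : (∫⁻ ω, h (fun i : Fin 1 => ω i) * g (ω 0) ∂ℙ x)
        = ∫⁻ ω, (fun _ => h (fun _ : Fin 1 => x) * g x) ω ∂ℙ x := by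
      apply start_congr ℙ hprob hstart x
      · exact ((hh.comp hcoords).mul (hg.comp (measurable_pi_apply 0)))
      · exact measurable_const
      · intro ω hω
        have h1 : (fun i : Fin 1 => ω i) = (fun _ : Fin 1 => x) := by
          funext i
          have h2 : (i : ℕ) = 0 := by omega
          rw [h2, hω]
        rw [h1, hω]
    rw [e0, e1, e2, lintegral_const_mul _ hG, lintegral_const]
    rw [measure_univ, mul_one]
    exact mul_le_mul_right (hPg x) _
  | succ n IH =>
    intro x h hh G hG g hg hPg
    have hcons : Measurable fun v : Fin (n + 1) → X => Fin.cons (α := fun _ => X) x v := by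
      apply measurable_pi_lambda
      intro i
      induction i using Fin.cases with
      | zero => simpa using measurable_const
      | succ j => simpa [Fin.cons_succ] using measurable_pi_apply j
    have hcoords : ∀ m : ℕ, Measurable fun ω : ℕ → X => (fun i : Fin m => ω i) :=
      fun m => measurable_pi_lambda _ fun i => measurable_pi_apply _
    have hshift : ∀ m : ℕ, Measurable fun ω : ℕ → X => (fun k => ω (k + m)) :=
      fun m => measurable_pi_lambda _ fun k => measurable_pi_apply _
    set F : (ℕ → X) → ℝ≥0∞ :=
      fun ω' => h (Fin.cons x (fun i : Fin (n + 1) => ω' i)) * G (fun k => ω' (k + n))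
      with hF_def
    set F₂ : (ℕ → X) → ℝ≥0∞ :=
      fun ω' => h (Fin.cons x (fun i : Fin (n + 1) => ω' i)) * g (ω' n)
      with hF₂_def
    have hFmeas : Measurable F :=
      ((hh.comp hcons).comp (hcoords (n + 1))).mul (hG.comp (hshift n))
    have hF₂meas : Measurable F₂ :=
      ((hh.comp hcons).comp (hcoords (n + 1))).mul (hg.comp (measurable_pi_apply n))
    have key : ∀ ω : ℕ → X, ω 0 = x →
        (fun i : Fin (n + 2) => ω i)
          = Fin.cons (α := fun _ => X) x (fun i : Fin (n + 1) => ω (i + 1)) := by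
      intro ω hω
      funext i
      induction i using Fin.cases with
      | zero => simpa using hω
      | succ j => simp [Fin.cons_succ]
    have stepA : (∫⁻ ω, h (fun i : Fin (n + 2) => ω i) * G (fun k => ω (k + (n + 1))) ∂ℙ x)
        = ∫⁻ ω, F (fun k => ω (k + 1)) ∂ℙ x := by
      apply start_congr ℙ hprob hstart x
      · exact ((hh.comp (hcoords (n + 2))).mul (hG.comp (hshift (n + 1))))
      · exact hFmeas.comp (hshift 1)
      · intro ω hω
        simp only [hF_def]
        rw [key ω hω]
        rfl
    have stepB := hMarkov x 1 F hFmeas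
    have stepC : (∫⁻ ω, (∫⁻ ω', F ω' ∂ℙ (ω 1)) ∂ℙ x)
        ≤ ∫⁻ ω, (∫⁻ ω', F₂ ω' ∂ℙ (ω 1)) ∂ℙ x := by
      apply lintegral_mono
      intro ω
      exact IH (ω 1) (fun v => h (Fin.cons x v)) (hh.comp hcons) G hG g hg hPg
    have stepD := (hMarkov x 1 F₂ hF₂meas).symm
    have stepE : (∫⁻ ω, F₂ (fun k => ω (k + 1)) ∂ℙ x)
        = ∫⁻ ω, h (fun i : Fin (n + 2) => ω i) * g (ω (n + 1)) ∂ℙ x := by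
      apply start_congr ℙ hprob hstart x
      · exact hF₂meas.comp (hshift 1)
      · exact ((hh.comp (hcoords (n + 2))).mul (hg.comp (measurable_pi_apply (n + 1))))
      · intro ω hω
        simp only [hF₂_def]
        rw [key ω hω]
    calc (∫⁻ ω, h (fun i : Fin (n + 2) => ω i) * G (fun k => ω (k + (n + 1))) ∂ℙ x)
        = ∫⁻ ω, F (fun k => ω (k + 1)) ∂ℙ x := stepA
      _ = ∫⁻ ω, (∫⁻ ω', F ω' ∂ℙ (ω 1)) ∂ℙ x := stepB
      _ ≤ ∫⁻ ω, (∫⁻ ω', F₂ ω' ∂ℙ (ω 1)) ∂ℙ x := stepC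
      _ = ∫⁻ ω, F₂ (fun k => ω (k + 1)) ∂ℙ x := stepD
      _ = _ := stepE

/-- Main induction: the integral of each iterate is bounded by `(ε⁻¹ ∨ B) V x` off `C`. -/
lemma main (hprob : ∀ x, IsProbabilityMeasure (ℙ x))
    (hstart : ∀ x, (ℙ x) {ω | ω 0 = x} = 1)
    (hMarkov : ∀ (x : X) (n : ℕ) (G : (ℕ → X) → ℝ≥0∞), Measurable G →
      (∫⁻ ω, G (fun k => ω (k + n)) ∂ℙ x)
        = ∫⁻ ω, (∫⁻ ω', G ω' ∂ℙ (ω n)) ∂ℙ x)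
    {f V : X → ℝ} (hf : Measurable f) (hV : Measurable V)
    (hV1 : ∀ y, 1 ≤ V y)
    {ε : ℝ} (hε0 : 0 < ε) (hε1 : ε < 1)
    {C : Set X} (hC : MeasurableSet C)
    {B : ℝ} (hB : ∀ y ∈ C, f y / V y ≤ B)
    {τ : (ℕ → X) → ℕ} (hτ1 : ∀ ω, 1 ≤ τ ω)
    (hτstop : ∀ n, MeasurableSet[natFiltration X n] {ω | τ ω = n})
    (hdrift1 : ∀ x ∉ C,
      (∫⁻ ω, ∑ k ∈ Finset.range (τ ω), ENNReal.ofReal (f (ω k)) ∂ℙ x)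
        ≤ ENNReal.ofReal (V x))
    (hdrift2 : ∀ x ∉ C,
      (∫⁻ ω, ENNReal.ofReal (V (ω (τ ω))) ∂ℙ x) ≤ ENNReal.ofReal ((1 - ε) * V x)) :
    ∀ n, ∀ x ∉ C,
      (∫⁻ ω, Sit C f τ n ω ∂ℙ x) ≤ ENNReal.ofReal (max ε⁻¹ B * V x) := by
  have hτm : Measurable τ := measurable_tau hτstop
  set M := max ε⁻¹ B with hM_def
  have hMpos : (0:ℝ) < M := lt_of_lt_of_le (inv_pos.mpr hε0) (le_max_left _ _)
  have hMε : (1:ℝ) ≤ M * ε := by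
    have h1 : ε⁻¹ * ε ≤ M * ε :=
      mul_le_mul_of_nonneg_right (le_max_left _ _) hε0.le
    rwa [inv_mul_cancel₀ hε0.ne'] at h1
  intro n
  induction n with
  | zero =>
    intro x hx
    simp only [Sit_zero, lintegral_zero]
    exact zero_le
  | succ n IH =>
    intro x hx
    have hSn : Measurable (Sit C f τ n) := measurable_Sit hC hf hτm n
    set P1 : (ℕ → X) → ℝ≥0∞ :=
      fun ω => ∑ k ∈ Finset.range (τ ω), ENNReal.ofReal (f (ω k)) with hP1_def
    set Emid : Set (ℕ → X) :=
      {ω | (∀ j, 1 ≤ j → j < τ ω → ω j ∉ C) ∧ ω (τ ω) ∈ C} with hEmid_def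
    set Etail : Set (ℕ → X) := {ω | ∀ j, 1 ≤ j → j < τ ω + 1 → ω j ∉ C} with hEtail_def
    set P2 : (ℕ → X) → ℝ≥0∞ :=
      Set.indicator Emid (fun ω => ENNReal.ofReal (f (ω (τ ω)))) with hP2_def
    set P3 : (ℕ → X) → ℝ≥0∞ :=
      Set.indicator Etail (fun ω => Sit C f τ n (shift (τ ω) ω)) with hP3_def
    have hdecomp : (fun ω => Sit C f τ (n + 1) ω) = fun ω => P1 ω + P2 ω + P3 ω := rfl
    have hP1meas : Measurable P1 :=
      measurable_comp_tau hτm (fun m => Finset.measurable_sum _ fun k _ =>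
        ENNReal.measurable_ofReal.comp (hf.comp (measurable_pi_apply k)))
    have hP2meas : Measurable P2 := by
      have : P2 = fun ω => (fun m => Set.indicator
          {ω' : ℕ → X | (∀ j, 1 ≤ j → j < m → ω' j ∉ C) ∧ ω' m ∈ C}
          (fun ω' => ENNReal.ofReal (f (ω' m)))) (τ ω) ω := rfl
      rw [this]
      exact measurable_comp_tau hτm fun m =>
        Measurable.indicator (ENNReal.measurable_ofReal.comp (hf.comp (measurable_pi_apply m)))
          ((measurable_setA C hC m).inter ((measurable_pi_apply m) hC))
    have hP3meas : Measurable P3 := by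
      have : P3 = fun ω => (fun m => Set.indicator
          {ω' : ℕ → X | ∀ j, 1 ≤ j → j < m + 1 → ω' j ∉ C}
          (fun ω' => Sit C f τ n (shift m ω'))) (τ ω) ω := rfl
      rw [this]
      exact measurable_comp_tau hτm fun m =>
        Measurable.indicator (hSn.comp (measurable_shift m)) (measurable_setA C hC (m + 1))
    -- the strong Markov bound for the last piece
    have b3 : (∫⁻ ω, P3 ω ∂ℙ x)
        ≤ ∫⁻ ω, Set.indicator Etail (fun ω => ENNReal.ofReal (M * V (ω (τ ω)))) ω ∂ℙ x := by
      set D : ℕ → Set (ℕ → X) :=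
        fun m => {ω | τ ω = m} ∩ {ω | ∀ j, 1 ≤ j → j < m + 1 → ω j ∉ C} with hD_def
      have hDmeas : ∀ m, MeasurableSet (D m) :=
        fun m => (hτm (measurableSet_singleton m)).inter (measurable_setA C hC (m + 1))
      have hstep1 : ∀ ω, P3 ω
          = ∑' m, Set.indicator (D m) (fun ω' => Sit C f τ n (shift m ω')) ω := by
        intro ω
        have hz : ∀ m, m ≠ τ ω →
            Set.indicator (D m) (fun ω' => Sit C f τ n (shift m ω')) ω = 0 := by
          intro m hm
          apply Set.indicator_of_notMem
          intro hc
          exact hm hc.1.symm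
        rw [tsum_eq_single (τ ω) hz]
        by_cases hmem : ω ∈ Etail
        · have hd : ω ∈ D (τ ω) := ⟨rfl, hmem⟩
          rw [hP3_def, Set.indicator_of_mem hmem, Set.indicator_of_mem hd]
        · have hd : ω ∉ D (τ ω) := fun hc => hmem hc.2
          rw [hP3_def, Set.indicator_of_notMem hmem, Set.indicator_of_notMem hd]
      have hstep4 : ∀ ω, (∑' m, Set.indicator (D m)
            (fun ω' => ENNReal.ofReal (M * V (ω' m))) ω)
          = Set.indicator Etail (fun ω => ENNReal.ofReal (M * V (ω (τ ω)))) ω := by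
        intro ω
        have hz : ∀ m, m ≠ τ ω →
            Set.indicator (D m) (fun ω' => ENNReal.ofReal (M * V (ω' m))) ω = 0 := by
          intro m hm
          apply Set.indicator_of_notMem
          intro hc
          exact hm hc.1.symm
        rw [tsum_eq_single (τ ω) hz]
        by_cases hmem : ω ∈ Etail
        · have hd : ω ∈ D (τ ω) := ⟨rfl, hmem⟩
          rw [Set.indicator_of_mem hmem, Set.indicator_of_mem hd]
        · have hd : ω ∉ D (τ ω) := fun hc => hmem hc.2
          rw [Set.indicator_of_notMem hmem, Set.indicator_of_notMem hd]
      -- the per-time-m strong Markov estimate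
      have hstep3 : ∀ m, (∫⁻ ω, Set.indicator (D m) (fun ω' => Sit C f τ n (shift m ω')) ω ∂ℙ x)
          ≤ ∫⁻ ω, Set.indicator (D m) (fun ω' => ENNReal.ofReal (M * V (ω' m))) ω ∂ℙ x := by
        intro m
        obtain ⟨s, hs, hseq⟩ := MeasurableSpace.measurableSet_comap.mp (hτstop m)
        set A' : Set (Fin (m + 1) → X) := {v | ∀ j : Fin (m + 1), 1 ≤ (j : ℕ) → v j ∉ C}
          with hA'_def
        have hA'meas : MeasurableSet A' := by
          have : A' = ⋂ (j : Fin (m + 1)), ⋂ (_ : 1 ≤ (j : ℕ)),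
              (fun v : Fin (m + 1) → X => v j) ⁻¹' Cᶜ := by
            ext v; simp [hA'_def, Set.mem_iInter]
          rw [this]
          exact MeasurableSet.iInter fun j => MeasurableSet.iInter fun _ =>
            (measurable_pi_apply j) hC.compl
        set h : (Fin (m + 1) → X) → ℝ≥0∞ := Set.indicator (s ∩ A') (fun _ => 1) with hh_def
        have hhmeas : Measurable h :=
          measurable_const.indicator (hs.inter hA'meas)
        have hmemiff : ∀ ω : ℕ → X, ((fun i : Fin (m + 1) => ω i) ∈ s ∩ A') ↔ ω ∈ D m := by
          intro ω
          constructor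
          · rintro ⟨h1, h2⟩
            refine ⟨?_, ?_⟩
            · have : ω ∈ (fun ω : ℕ → X => fun i : Fin (m + 1) => ω i) ⁻¹' s := h1
              rw [hseq] at this
              exact this
            · intro j hj1 hjm
              have := h2 ⟨j, hjm⟩ hj1
              simpa using this
          · rintro ⟨h1, h2⟩
            constructor
            · have : ω ∈ (fun ω : ℕ → X => fun i : Fin (m + 1) => ω i) ⁻¹' s := by
                rw [hseq]; exact h1
              exact this
            · intro j hj1
              exact h2 (j : ℕ) hj1 j.isLt
        have hindic : ∀ (G' : (ℕ → X) → ℝ≥0∞) (ω : ℕ → X),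
            Set.indicator (D m) G' ω = h (fun i : Fin (m + 1) => ω i) * G' ω := by
          intro G' ω
          by_cases hmem : ω ∈ D m
          · rw [Set.indicator_of_mem hmem, hh_def,
              Set.indicator_of_mem ((hmemiff ω).mpr hmem), one_mul]
          · rw [Set.indicator_of_notMem hmem, hh_def,
              Set.indicator_of_notMem (fun hc => hmem ((hmemiff ω).mp hc)), zero_mul]
        set g : X → ℝ≥0∞ :=
          fun y => Set.indicator C (fun _ => (⊤ : ℝ≥0∞)) y + ENNReal.ofReal (M * V y)
          with hg_def
        have hgmeas : Measurable g :=
          (measurable_const.indicator hC).add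
            (ENNReal.measurable_ofReal.comp ((measurable_const.mul hV)))
        have hPg : ∀ y, (∫⁻ ω, Sit C f τ n ω ∂ℙ y) ≤ g y := by
          intro y
          by_cases hy : y ∈ C
          · rw [hg_def]
            simp only [Set.indicator_of_mem hy, top_add]
            exact le_top
          · rw [hg_def]
            simp only [Set.indicator_of_notMem hy, zero_add]
            exact IH y hy
        have hmark := markov_le ℙ hprob hstart hMarkov m x h hhmeas
          (Sit C f τ n) hSn g hgmeas hPg
        have lhs_eq : (∫⁻ ω, Set.indicator (D m) (fun ω' => Sit C f τ n (shift m ω')) ω ∂ℙ x)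
            = ∫⁻ ω, h (fun i : Fin (m + 1) => ω i) * Sit C f τ n (fun k => ω (k + m)) ∂ℙ x := by
          apply lintegral_congr
          intro ω
          exact hindic (fun ω' => Sit C f τ n (shift m ω')) ω
        have rhs_eq : (∫⁻ ω, h (fun i : Fin (m + 1) => ω i) * g (ω m) ∂ℙ x)
            = ∫⁻ ω, Set.indicator (D m) (fun ω' => g (ω' m)) ω ∂ℙ x := by
          apply lintegral_congr
          intro ω
          exact (hindic (fun ω' => g (ω' m)) ω).symm
        have final_eq : (∫⁻ ω, Set.indicator (D m) (fun ω' => g (ω' m)) ω ∂ℙ x)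
            = ∫⁻ ω, Set.indicator (D m) (fun ω' => ENNReal.ofReal (M * V (ω' m))) ω ∂ℙ x := by
          apply lintegral_congr
          intro ω
          by_cases hmem : ω ∈ D m
          · rw [Set.indicator_of_mem hmem, Set.indicator_of_mem hmem]
            have hm1 : 1 ≤ m := hmem.1 ▸ hτ1 ω
            have hnotC : ω m ∉ C := hmem.2 m hm1 (by omega)
            rw [hg_def]
            simp only [Set.indicator_of_notMem hnotC, zero_add]
          · rw [Set.indicator_of_notMem hmem, Set.indicator_of_notMem hmem]
        calc (∫⁻ ω, Set.indicator (D m) (fun ω' => Sit C f τ n (shift m ω')) ω ∂ℙ x)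
            = ∫⁻ ω, h (fun i : Fin (m + 1) => ω i) * Sit C f τ n (fun k => ω (k + m)) ∂ℙ x :=
              lhs_eq
          _ ≤ ∫⁻ ω, h (fun i : Fin (m + 1) => ω i) * g (ω m) ∂ℙ x := hmark
          _ = ∫⁻ ω, Set.indicator (D m) (fun ω' => g (ω' m)) ω ∂ℙ x := rhs_eq
          _ = _ := final_eq
      calc (∫⁻ ω, P3 ω ∂ℙ x)
          = ∫⁻ ω, ∑' m, Set.indicator (D m) (fun ω' => Sit C f τ n (shift m ω')) ω ∂ℙ x :=
            lintegral_congr hstep1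
        _ = ∑' m, ∫⁻ ω, Set.indicator (D m) (fun ω' => Sit C f τ n (shift m ω')) ω ∂ℙ x :=
            lintegral_tsum fun m =>
              ((hSn.comp (measurable_shift m)).indicator (hDmeas m)).aemeasurable
        _ ≤ ∑' m, ∫⁻ ω, Set.indicator (D m) (fun ω' => ENNReal.ofReal (M * V (ω' m))) ω ∂ℙ x :=
            ENNReal.tsum_le_tsum hstep3
        _ = ∫⁻ ω, ∑' m, Set.indicator (D m) (fun ω' => ENNReal.ofReal (M * V (ω' m))) ω ∂ℙ x :=
            (lintegral_tsum fun m =>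
              ((ENNReal.measurable_ofReal.comp
                ((measurable_const.mul hV).comp (measurable_pi_apply m))).indicator
                (hDmeas m)).aemeasurable).symm
        _ = _ := lintegral_congr hstep4
    -- the middle piece
    have b2 : (∫⁻ ω, P2 ω ∂ℙ x)
        ≤ ∫⁻ ω, Set.indicator Emid (fun ω => ENNReal.ofReal (B * V (ω (τ ω)))) ω ∂ℙ x := by
      apply lintegral_mono
      intro ω
      by_cases hmem : ω ∈ Emid
      · rw [hP2_def, Set.indicator_of_mem hmem, Set.indicator_of_mem hmem]
        apply ENNReal.ofReal_le_ofReal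
        have hCy : ω (τ ω) ∈ C := hmem.2
        have hVpos : (0:ℝ) < V (ω (τ ω)) := lt_of_lt_of_le one_pos (hV1 _)
        have := hB _ hCy
        rw [div_le_iff₀ hVpos] at this
        linarith
      · rw [hP2_def, Set.indicator_of_notMem hmem, Set.indicator_of_notMem hmem]
    -- combine the last two pieces pointwise
    have hpoint : ∀ ω, Set.indicator Emid (fun ω => ENNReal.ofReal (B * V (ω (τ ω)))) ω
        + Set.indicator Etail (fun ω => ENNReal.ofReal (M * V (ω (τ ω)))) ω
        ≤ ENNReal.ofReal (M * V (ω (τ ω))) := by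
      intro ω
      have hVnn : (0:ℝ) ≤ V (ω (τ ω)) := le_trans zero_le_one (hV1 _)
      by_cases h1 : ω ∈ Emid
      · by_cases h2 : ω ∈ Etail
        · exact absurd (h2 (τ ω) (hτ1 ω) (by omega)) (fun hc => hc h1.2)
        · rw [Set.indicator_of_mem h1, Set.indicator_of_notMem h2, add_zero]
          exact ENNReal.ofReal_le_ofReal
            (mul_le_mul_of_nonneg_right (le_max_right _ _) hVnn)
      · rw [Set.indicator_of_notMem h1, zero_add]
        by_cases h2 : ω ∈ Etail
        · rw [Set.indicator_of_mem h2]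
        · rw [Set.indicator_of_notMem h2]
          exact zero_le
    have hVτmeas : Measurable fun ω : ℕ → X => ENNReal.ofReal (V (ω (τ ω))) :=
      measurable_comp_tau hτm fun m =>
        ENNReal.measurable_ofReal.comp (hV.comp (measurable_pi_apply m))
    have b23 : (∫⁻ ω, P2 ω ∂ℙ x) + (∫⁻ ω, P3 ω ∂ℙ x)
        ≤ ENNReal.ofReal (M * ((1 - ε) * V x)) := by
      calc (∫⁻ ω, P2 ω ∂ℙ x) + (∫⁻ ω, P3 ω ∂ℙ x)
          ≤ (∫⁻ ω, Set.indicator Emid (fun ω => ENNReal.ofReal (B * V (ω (τ ω)))) ω ∂ℙ x)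
            + ∫⁻ ω, Set.indicator Etail (fun ω => ENNReal.ofReal (M * V (ω (τ ω)))) ω ∂ℙ x :=
            add_le_add b2 b3
        _ = ∫⁻ ω, (Set.indicator Emid (fun ω => ENNReal.ofReal (B * V (ω (τ ω)))) ω
            + Set.indicator Etail (fun ω => ENNReal.ofReal (M * V (ω (τ ω)))) ω) ∂ℙ x := by
            have hm1 : Measurable (Set.indicator Emid
                fun ω => ENNReal.ofReal (B * V (ω (τ ω)))) := by
              have e : (Set.indicator Emid fun ω => ENNReal.ofReal (B * V (ω (τ ω))))
                  = fun ω => (fun m => Set.indicator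
                      {ω' : ℕ → X | (∀ j, 1 ≤ j → j < m → ω' j ∉ C) ∧ ω' m ∈ C}
                      (fun ω' => ENNReal.ofReal (B * V (ω' m)))) (τ ω) ω := rfl
              rw [e]
              exact measurable_comp_tau hτm fun m => Measurable.indicator
                (ENNReal.measurable_ofReal.comp
                  ((measurable_const.mul hV).comp (measurable_pi_apply m)))
                ((measurable_setA C hC m).inter ((measurable_pi_apply m) hC))
            exact (lintegral_add_left hm1 _).symm
        _ ≤ ∫⁻ ω, ENNReal.ofReal (M * V (ω (τ ω))) ∂ℙ x := lintegral_mono hpoint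
        _ = ∫⁻ ω, ENNReal.ofReal M * ENNReal.ofReal (V (ω (τ ω))) ∂ℙ x := by
            apply lintegral_congr
            intro ω
            rw [ENNReal.ofReal_mul hMpos.le]
        _ = ENNReal.ofReal M * ∫⁻ ω, ENNReal.ofReal (V (ω (τ ω))) ∂ℙ x :=
            lintegral_const_mul _ hVτmeas
        _ ≤ ENNReal.ofReal M * ENNReal.ofReal ((1 - ε) * V x) :=
            mul_le_mul_right (hdrift2 x hx) _
        _ = ENNReal.ofReal (M * ((1 - ε) * V x)) := (ENNReal.ofReal_mul hMpos.le).symm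
    -- put everything together
    have hsplit : (∫⁻ ω, Sit C f τ (n + 1) ω ∂ℙ x)
        = (∫⁻ ω, P1 ω ∂ℙ x) + ((∫⁻ ω, P2 ω ∂ℙ x) + (∫⁻ ω, P3 ω ∂ℙ x)) := by
      have e : (∫⁻ ω, Sit C f τ (n + 1) ω ∂ℙ x) = ∫⁻ ω, (P1 ω + P2 ω + P3 ω) ∂ℙ x := rfl
      rw [e]
      rw [lintegral_add_left (f := fun ω => P1 ω + P2 ω) (hP1meas.add hP2meas), lintegral_add_left hP1meas, add_assoc]
    rw [hsplit]
    have hb1 : (∫⁻ ω, P1 ω ∂ℙ x) ≤ ENNReal.ofReal (V x) := hdrift1 x hx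
    calc (∫⁻ ω, P1 ω ∂ℙ x) + ((∫⁻ ω, P2 ω ∂ℙ x) + (∫⁻ ω, P3 ω ∂ℙ x))
        ≤ ENNReal.ofReal (V x) + ENNReal.ofReal (M * ((1 - ε) * V x)) := add_le_add hb1 b23
      _ = ENNReal.ofReal (V x + M * ((1 - ε) * V x)) := by
          have h1ε : (0:ℝ) ≤ 1 - ε := by linarith
          have hnn : (0:ℝ) ≤ M * ((1 - ε) * V x) :=
            mul_nonneg hMpos.le (mul_nonneg h1ε (le_trans zero_le_one (hV1 x)))
          rw [← ENNReal.ofReal_add (le_trans zero_le_one (hV1 x)) hnn]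
      _ ≤ ENNReal.ofReal (M * V x) := by
          apply ENNReal.ofReal_le_ofReal
          have hVx : (1:ℝ) ≤ V x := hV1 x
          nlinarith [mul_le_mul_of_nonneg_right hMε (le_trans zero_le_one hVx)]

end Markov

end Stmt6Aux

open Stmt6Aux

/-- State-dependent drift: if a Markov chain `Φ` (canonical chain `Φ_k(ω) = ω k` under
the family of laws `ℙ x`) admits a stopping time `τ ≥ 1` with
`E_x[Σ_{k<τ} f(Φ_k)] ≤ V(x)` and `E_x[V(Φ_τ)] ≤ (1-ε)V(x)` for `x ∉ C`, and
`sup_C f/V ≤ B`, then for all `x ∉ C`,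
`E_x[Σ_{k=0}^{τ_C} f(Φ_k)] ≤ (ε⁻¹ ∨ B) V(x)`, where `τ_C` is the return time to `C`
(a term of the sum is counted iff `k ≤ τ_C`, i.e. no `j` with `1 ≤ j < k` has `Φ_j ∈ C`). -/
theorem stmt6
    (X : Type) [MeasurableSpace X]
    (ℙ : X → Measure (ℕ → X)) (hprob : ∀ x, IsProbabilityMeasure (ℙ x))
    (hstart : ∀ x, (ℙ x) {ω | ω 0 = x} = 1)
    (hMarkov : ∀ (x : X) (n : ℕ) (G : (ℕ → X) → ℝ≥0∞), Measurable G →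
      (∫⁻ ω, G (fun k => ω (k + n)) ∂ℙ x)
        = ∫⁻ ω, (∫⁻ ω', G ω' ∂ℙ (ω n)) ∂ℙ x)
    (f V : X → ℝ) (hf : Measurable f) (hV : Measurable V)
    (hf1 : ∀ y, 1 ≤ f y) (hV1 : ∀ y, 1 ≤ V y)
    (ε : ℝ) (hε0 : 0 < ε) (hε1 : ε < 1)
    (C : Set X) (hC : MeasurableSet C)
    (B : ℝ) (hB : ∀ y ∈ C, f y / V y ≤ B)
    (τ : (ℕ → X) → ℕ) (hτ1 : ∀ ω, 1 ≤ τ ω)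
    (hτstop : ∀ n, MeasurableSet[natFiltration X n] {ω | τ ω = n})
    (hdrift1 : ∀ x ∉ C,
      (∫⁻ ω, ∑ k ∈ Finset.range (τ ω), ENNReal.ofReal (f (ω k)) ∂ℙ x)
        ≤ ENNReal.ofReal (V x))
    (hdrift2 : ∀ x ∉ C,
      (∫⁻ ω, ENNReal.ofReal (V (ω (τ ω))) ∂ℙ x) ≤ ENNReal.ofReal ((1 - ε) * V x)) :
    ∀ x ∉ C,
      (∫⁻ ω, ∑' k : ℕ,
          Set.indicator {k' : ℕ | ∀ j, 1 ≤ j → j < k' → ω j ∉ C}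
            (fun k' => ENNReal.ofReal (f (ω k'))) k ∂ℙ x)
        ≤ ENNReal.ofReal (max ε⁻¹ B * V x) := by
  intro x hx
  have hτm : Measurable τ := measurable_tau hτstop
  calc (∫⁻ ω, ∑' k : ℕ,
          Set.indicator {k' : ℕ | ∀ j, 1 ≤ j → j < k' → ω j ∉ C}
            (fun k' => ENNReal.ofReal (f (ω k'))) k ∂ℙ x)
      ≤ ∫⁻ ω, ⨆ n, Sit C f τ n ω ∂ℙ x := by
        apply lintegral_mono
        intro ω
        dsimp only
        rw [ENNReal.tsum_eq_iSup_nat]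
        exact iSup_mono fun n => dom hτ1 n ω
    _ = ⨆ n, ∫⁻ ω, Sit C f τ n ω ∂ℙ x := by
        apply lintegral_iSup (measurable_Sit hC hf hτm)
        apply monotone_nat_of_le_succ
        intro n ω
        exact Sit_mono n ω
    _ ≤ ENNReal.ofReal (max ε⁻¹ B * V x) := by
        apply iSup_le
        intro n
        exact main ℙ hprob hstart hMarkov hf hV hV1 hε0 hε1 hC hB hτ1 hτstop hdrift1
          hdrift2 n x hx
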